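/- arXiv:1403.6079 — 2 statements merged into one kernel-verified Lean document; each statement's English description precedes it below -/
import Mathlib

section
/- For all real numbers $u_x, u_y, u_z$ and $s_x, s_y, s_z$, defining $B_{pq} = \cosh(u_p - u_q) + \tfrac{1}{2} e^{u_p+u_q}(s_p - s_q)^2$ for any pair of indices, one has $B_{xz} \le 2\, B_{xy}\, B_{yz}$. -/
lemma aux0 (a b c p q : ℝ) (ha : 0 < a) (hb : 0 < b) (hc : 0 < c) :
    (a/c + c/a)/2 + (1/2) * (a*c) * (p + q)^2 ≤
      2 * ((a/b + b/a)/2 + (1/2) * (a*b) * p^2)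
        * ((b/c + c/b)/2 + (1/2) * (b*c) * q^2) := by
  rw [← sub_nonneg]
  have h : 2 * ((a/b + b/a)/2 + (1/2) * (a*b) * p^2)
        * ((b/c + c/b)/2 + (1/2) * (b*c) * q^2) - ((a/c + c/a)/2 + (1/2) * (a*c) * (p + q)^2)
      = ((a^2+b^2+a^2*b^2*p^2)*(b^2+c^2+b^2*c^2*q^2)
         - (a^2*b^2 + b^2*c^2 + a^2*b^2*c^2*(p+q)^2)) / (2*a*b^2*c) := by
    field_simp
  rw [h]
  apply div_nonneg _ (by positivity)
  nlinarith [sq_nonneg (a*c - a*b^2*c*p*q), sq_nonneg (b^2*c*q), sq_nonneg (a*b^2*p), sq_nonneg (b^2)]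

/-- For all real numbers `u_x, u_y, u_z` and `s_x, s_y, s_z`, defining
`B_{pq} = cosh(u_p - u_q) + (1/2) e^{u_p+u_q}(s_p - s_q)^2`, one has
`B_{xz} ≤ 2 B_{xy} B_{yz}`. -/
theorem stmt0 (ux uy uz sx sy sz : ℝ) :
    Real.cosh (ux - uz) + (1/2) * Real.exp (ux + uz) * (sx - sz)^2 ≤
      2 * (Real.cosh (ux - uy) + (1/2) * Real.exp (ux + uy) * (sx - sy)^2)
        * (Real.cosh (uy - uz) + (1/2) * Real.exp (uy + uz) * (sy - sz)^2) := by
  have h := aux0 (Real.exp ux) (Real.exp uy) (Real.exp uz) (sx - sy) (sy - sz)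
    (Real.exp_pos ux) (Real.exp_pos uy) (Real.exp_pos uz)
  simp only [Real.cosh_eq, Real.exp_sub, Real.exp_neg, Real.exp_add] at *
  have e1 : sx - sz = (sx - sy) + (sy - sz) := by ring
  rw [e1]
  convert h using 2 <;> rw [inv_div]
end

section
/- Let $u_i, u_j, u_x, u_y, s_i, s_j, s_x, s_y$ be real numbers and $a_{ij} > 0$. Define $B_{pq} = \cosh(u_p-u_q)+\tfrac12 e^{u_p+u_q}(s_p-s_q)^2$ and the conductance $c^{xy}_{ij} = a_{ij} e^{u_i+u_j-u_x-u_y} B_{xy} / B_{ij}$. Then $(c^{xy}_{ij}/a_{ij})^{-1} \le 16\, B_{ix}^2 B_{jx}^2$, and similarly with $x$ replaced by $y$. -/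
set_option maxHeartbeats 1000000
open Real in
lemma stmt4_key (ui uj ux uy si sj sx sy : ℝ) :
    (Real.cosh (ui - uj) + (1/2) * Real.exp (ui + uj) * (si - sj)^2) *
      Real.exp (ux + uy - ui - uj) /
      (Real.cosh (ux - uy) + (1/2) * Real.exp (ux + uy) * (sx - sy)^2) ≤
    16 * (Real.cosh (ui - ux) + (1/2) * Real.exp (ui + ux) * (si - sx)^2)^2 *
      (Real.cosh (uj - ux) + (1/2) * Real.exp (uj + ux) * (sj - sx)^2)^2 := by
  set Ci := Real.cosh (ui - ux) with hCi
  set Cj := Real.cosh (uj - ux) with hCj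
  set Xi := (1/2) * Real.exp (ui + ux) * (si - sx)^2 with hXi
  set Xj := (1/2) * Real.exp (uj + ux) * (sj - sx)^2 with hXj
  have hCi1 : 1 ≤ Ci := Real.one_le_cosh _
  have hCj1 : 1 ≤ Cj := Real.one_le_cosh _
  have hXi0 : 0 ≤ Xi := by positivity
  have hXj0 : 0 ≤ Xj := by positivity
  have hBxy_pos : 0 < Real.cosh (ux - uy) + (1/2) * Real.exp (ux + uy) * (sx - sy)^2 := by
    have := Real.cosh_pos (ux - uy); positivity
  have hBij_pos : 0 < Real.cosh (ui - uj) + (1/2) * Real.exp (ui + uj) * (si - sj)^2 := by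
    have := Real.cosh_pos (ui - uj); positivity
  -- step 1: 1/Bxy ≤ 2 exp(ux - uy)
  have h1 : Real.exp (uy - ux) / 2 ≤ Real.cosh (ux - uy) + (1/2) * Real.exp (ux + uy) * (sx - sy)^2 := by
    have h := Real.cosh_eq (ux - uy)
    have : Real.exp (-(ux - uy)) = Real.exp (uy - ux) := by ring_nf
    nlinarith [Real.exp_pos (ux - uy), sq_nonneg (sx - sy), Real.exp_pos (ux + uy),
      mul_nonneg (Real.exp_pos (ux+uy)).le (sq_nonneg (sx - sy))]
  -- exp bounds
  have hEi : Real.exp (ux - ui) ≤ 2 * Ci := by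
    have h := Real.cosh_eq (ui - ux)
    have h2 : Real.exp (-(ui - ux)) = Real.exp (ux - ui) := by ring_nf
    nlinarith [Real.exp_pos (ui - ux)]
  have hEj : Real.exp (ux - uj) ≤ 2 * Cj := by
    have h := Real.cosh_eq (uj - ux)
    have h2 : Real.exp (-(uj - ux)) = Real.exp (ux - uj) := by ring_nf
    nlinarith [Real.exp_pos (uj - ux)]
  have hEi' : Real.exp (ui - ux) ≤ 2 * Ci := by
    have h := Real.cosh_eq (ui - ux)
    nlinarith [Real.exp_pos (-(ui - ux))]
  have hEj' : Real.exp (uj - ux) ≤ 2 * Cj := by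
    have h := Real.cosh_eq (uj - ux)
    nlinarith [Real.exp_pos (-(uj - ux))]
  have hE : Real.exp (2*ux - ui - uj) ≤ 4 * Ci * Cj := by
    have : Real.exp (2*ux - ui - uj) = Real.exp (ux - ui) * Real.exp (ux - uj) := by
      rw [← Real.exp_add]; ring_nf
    rw [this]
    calc Real.exp (ux - ui) * Real.exp (ux - uj) ≤ (2*Ci) * (2*Cj) := by
          apply mul_le_mul hEi hEj (Real.exp_pos _).le (by linarith)
      _ = 4 * Ci * Cj := by ring
  -- cosh bound
  have hcosh : Real.cosh (ui - uj) ≤ 2 * Ci * Cj := by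
    have hadd : ui - uj = (ui - ux) - (uj - ux) := by ring
    rw [hadd, Real.cosh_sub]
    have h1 : (1:ℝ) ≤ Real.cosh ((ui - ux) + (uj - ux)) := Real.one_le_cosh _
    rw [Real.cosh_add] at h1
    simp only [← hCi, ← hCj] at *
    linarith
  -- s-term bound
  have hs : (1/2) * Real.exp (ui + uj) * (si - sj)^2 ≤ 4 * Cj * Xi + 4 * Ci * Xj := by
    have e1 : Real.exp (ui + uj) = Real.exp (uj - ux) * Real.exp (ui + ux) := by
      rw [← Real.exp_add]; ring_nf
    have e2 : Real.exp (ui + uj) = Real.exp (ui - ux) * Real.exp (uj + ux) := by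
      rw [← Real.exp_add]; ring_nf
    have hsq : (si - sj)^2 ≤ 2*(si - sx)^2 + 2*(sj - sx)^2 := by nlinarith [sq_nonneg (si + sj - 2*sx)]
    have b1 : Real.exp (ui + uj) * (si - sx)^2 ≤ 4 * Cj * Xi := by
      rw [e1, hXi]
      have := mul_le_mul_of_nonneg_right hEj' (mul_nonneg (Real.exp_pos (ui+ux)).le (sq_nonneg (si - sx)))
      nlinarith [Real.exp_pos (ui+ux), sq_nonneg (si - sx)]
    have b2 : Real.exp (ui + uj) * (sj - sx)^2 ≤ 4 * Ci * Xj := by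
      rw [e2, hXj]
      have := mul_le_mul_of_nonneg_right hEi' (mul_nonneg (Real.exp_pos (uj+ux)).le (sq_nonneg (sj - sx)))
      nlinarith [Real.exp_pos (uj+ux), sq_nonneg (sj - sx)]
    nlinarith [Real.exp_pos (ui + uj)]
  have hBij_le : Real.cosh (ui - uj) + (1/2) * Real.exp (ui + uj) * (si - sj)^2
      ≤ 2*Ci*Cj + 4*Cj*Xi + 4*Ci*Xj := by linarith
  -- combine
  rw [div_le_iff₀ hBxy_pos]
  have key : (Real.cosh (ui - uj) + (1/2) * Real.exp (ui + uj) * (si - sj)^2) *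
      Real.exp (ux + uy - ui - uj) ≤
      (16 * (Ci + Xi)^2 * (Cj + Xj)^2) * (Real.exp (uy - ux) / 2) := by
    have hexp : Real.exp (ux + uy - ui - uj) = Real.exp (2*ux - ui - uj) * Real.exp (uy - ux) := by
      rw [← Real.exp_add]; ring_nf
    rw [hexp]
    have hstep : (Real.cosh (ui - uj) + (1/2) * Real.exp (ui + uj) * (si - sj)^2) *
        Real.exp (2*ux - ui - uj) ≤ (2*Ci*Cj + 4*Cj*Xi + 4*Ci*Xj) * (4*Ci*Cj) := by
      apply mul_le_mul hBij_le hE (Real.exp_pos _).le (by nlinarith)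
    have hfin : (2*Ci*Cj + 4*Cj*Xi + 4*Ci*Xj) * (4*Ci*Cj) ≤ 16 * (Ci + Xi)^2 * (Cj + Xj)^2 / 2 := by
      nlinarith [mul_nonneg hXi0 hXj0, mul_nonneg (mul_nonneg hXi0 hXj0) (mul_nonneg (by linarith : (0:ℝ) ≤ Ci) (by linarith : (0:ℝ) ≤ Cj)), sq_nonneg (Ci*Xj - Cj*Xi), mul_nonneg hXi0 (by linarith : (0:ℝ) ≤ Cj), mul_nonneg hXj0 (by linarith : (0:ℝ) ≤ Ci), sq_nonneg (Xi*Xj)]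
    calc _ ≤ (2*Ci*Cj + 4*Cj*Xi + 4*Ci*Xj) * (4*Ci*Cj) * Real.exp (uy - ux) := by
            rw [← mul_assoc]
            exact mul_le_mul_of_nonneg_right hstep (Real.exp_pos _).le
      _ ≤ (16 * (Ci + Xi)^2 * (Cj + Xj)^2 / 2) * Real.exp (uy - ux) := by
            apply mul_le_mul_of_nonneg_right hfin (Real.exp_pos _).le
      _ = (16 * (Ci + Xi)^2 * (Cj + Xj)^2) * (Real.exp (uy - ux) / 2) := by ring
  calc (Real.cosh (ui - uj) + (1/2) * Real.exp (ui + uj) * (si - sj)^2) *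
        Real.exp (ux + uy - ui - uj)
      ≤ (16 * (Ci + Xi)^2 * (Cj + Xj)^2) * (Real.exp (uy - ux) / 2) := key
    _ ≤ (16 * (Ci + Xi)^2 * (Cj + Xj)^2) *
        (Real.cosh (ux - uy) + (1/2) * Real.exp (ux + uy) * (sx - sy)^2) := by
        apply mul_le_mul_of_nonneg_left h1 (by positivity)

/-- With `B_{pq} = cosh(u_p-u_q)+(1/2) e^{u_p+u_q}(s_p-s_q)^2` and conductance
`c^{xy}_{ij} = a_{ij} e^{u_i+u_j-u_x-u_y} B_{xy}/B_{ij}`, one has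
`(c^{xy}_{ij}/a_{ij})⁻¹ ≤ 16 B_{ix}² B_{jx}²`, and similarly with `x` replaced by `y`. -/
theorem stmt4 (ui uj ux uy si sj sx sy aij : ℝ) (haij : 0 < aij)
    (Bij Bxy Bix Bjx Biy Bjy cxyij : ℝ)
    (hBij : Bij = Real.cosh (ui - uj) + (1/2) * Real.exp (ui + uj) * (si - sj)^2)
    (hBxy : Bxy = Real.cosh (ux - uy) + (1/2) * Real.exp (ux + uy) * (sx - sy)^2)
    (hBix : Bix = Real.cosh (ui - ux) + (1/2) * Real.exp (ui + ux) * (si - sx)^2)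
    (hBjx : Bjx = Real.cosh (uj - ux) + (1/2) * Real.exp (uj + ux) * (sj - sx)^2)
    (hBiy : Biy = Real.cosh (ui - uy) + (1/2) * Real.exp (ui + uy) * (si - sy)^2)
    (hBjy : Bjy = Real.cosh (uj - uy) + (1/2) * Real.exp (uj + uy) * (sj - sy)^2)
    (hc : cxyij = aij * Real.exp (ui + uj - ux - uy) * Bxy / Bij) :
    (cxyij / aij)⁻¹ ≤ 16 * Bix^2 * Bjx^2 ∧
    (cxyij / aij)⁻¹ ≤ 16 * Biy^2 * Bjy^2 := by
  have hBij_pos : 0 < Bij := by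
    rw [hBij]; have := Real.cosh_pos (ui - uj); positivity
  have hBxy_pos : 0 < Bxy := by
    rw [hBxy]; have := Real.cosh_pos (ux - uy); positivity
  have h1 : (cxyij / aij)⁻¹ = Bij * Real.exp (ux + uy - ui - uj) / Bxy := by
    rw [hc]
    rw [show ux + uy - ui - uj = -(ui + uj - ux - uy) by ring, Real.exp_neg]
    field_simp
  constructor
  · rw [h1, hBij, hBxy, hBix, hBjx]
    exact stmt4_key ui uj ux uy si sj sx sy
  · have e1 : Real.cosh (ux - uy) = Real.cosh (uy - ux) := by
      rw [show ux - uy = -(uy - ux) by ring, Real.cosh_neg]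
    have e2 : (sx - sy)^2 = (sy - sx)^2 := by ring
    have e4 : ux + uy - ui - uj = uy + ux - ui - uj := by ring
    rw [h1, hBij, hBxy, hBiy, hBjy, e1, e2, e4,
      show ux + uy = uy + ux by ring]
    exact stmt4_key ui uj uy ux si sj sy sx
end
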